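/- Let V₁, V₂: X₁×X̂₁ → ℝ≥0 and X₂×X̂₂ → ℝ≥0 be nonnegative functions and δ₁, δ₂ class K∞ functions. Define Ṽ(x, x̂) = max(δ₁⁻¹(V₁(x₁, x̂₁)), δ₂⁻¹(V₂(x₂, x̂₂))) for x = (x₁,x₂), x̂ = (x̂₁,x̂₂). If α₁, α₂ are class K∞ functions with α_i(‖h_i(x_i) − ĥ_i(x̂_i)‖) ≤ V_i(x_i, x̂_i), then α̃(max_i ‖h_i(x_i) − ĥ_i(x̂_i)‖) ≤ Ṽ(x, x̂), where α̃ is the inverse of s ↦ max(α₁⁻¹(δ₁(s)), α₂⁻¹(δ₂(s))). -/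
import Mathlib


/-- A class K∞ function: continuous, strictly increasing, vanishing at 0, and unbounded. -/
def IsKInf (f : NNReal → NNReal) : Prop :=
  Continuous f ∧ StrictMono f ∧ f 0 = 0 ∧ Filter.Tendsto f Filter.atTop Filter.atTop

private lemma inv_strictMono {f fInv : NNReal → NNReal} (hf : StrictMono f)
    (hfi : ∀ s, fInv (f s) = s ∧ f (fInv s) = s) : StrictMono fInv := by
  intro a b hab
  have := hf.lt_iff_lt (a := fInv a) (b := fInv b)
  rw [(hfi a).2, (hfi b).2] at this
  exact this.mp hab

theorem stmt6
    {X1 Xh1 X2 Xh2 Y1 Y2 : Type*} [NormedAddCommGroup Y1] [NormedAddCommGroup Y2]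
    (h1 : X1 → Y1) (hh1 : Xh1 → Y1) (h2 : X2 → Y2) (hh2 : Xh2 → Y2)
    (V1 : X1 → Xh1 → NNReal) (V2 : X2 → Xh2 → NNReal)
    (δ1 δ2 δ1Inv δ2Inv α1 α2 α1Inv α2Inv : NNReal → NNReal)
    (hδ1 : IsKInf δ1) (hδ2 : IsKInf δ2) (hα1 : IsKInf α1) (hα2 : IsKInf α2)
    (hδ1Inv : ∀ s, δ1Inv (δ1 s) = s ∧ δ1 (δ1Inv s) = s)
    (hδ2Inv : ∀ s, δ2Inv (δ2 s) = s ∧ δ2 (δ2Inv s) = s)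
    (hα1Inv : ∀ s, α1Inv (α1 s) = s ∧ α1 (α1Inv s) = s)
    (hα2Inv : ∀ s, α2Inv (α2 s) = s ∧ α2 (α2Inv s) = s)
    (hV1 : ∀ x1 xh1, α1 ‖h1 x1 - hh1 xh1‖₊ ≤ V1 x1 xh1)
    (hV2 : ∀ x2 xh2, α2 ‖h2 x2 - hh2 xh2‖₊ ≤ V2 x2 xh2)
    -- α̃ is the inverse of s ↦ max(α₁⁻¹(δ₁(s)), α₂⁻¹(δ₂(s))):
    (αt : NNReal → NNReal)
    (hαt : ∀ s, αt (max (α1Inv (δ1 s)) (α2Inv (δ2 s))) = s ∧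
                max (α1Inv (δ1 (αt s))) (α2Inv (δ2 (αt s))) = s) :
    ∀ (x1 : X1) (xh1 : Xh1) (x2 : X2) (xh2 : Xh2),
      αt (max ‖h1 x1 - hh1 xh1‖₊ ‖h2 x2 - hh2 xh2‖₊) ≤
        max (δ1Inv (V1 x1 xh1)) (δ2Inv (V2 x2 xh2)) := by
  intro x1 xh1 x2 xh2
  have hα1i := inv_strictMono hα1.2.1 hα1Inv
  have hα2i := inv_strictMono hα2.2.1 hα2Inv
  -- g := s ↦ max (α1Inv (δ1 s)) (α2Inv (δ2 s)) is strictly monotone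
  set g : NNReal → NNReal := fun s => max (α1Inv (δ1 s)) (α2Inv (δ2 s)) with hg
  have hgmono : StrictMono g := fun a b hab =>
    max_lt_max (hα1i (hδ1.2.1 hab)) (hα2i (hδ2.2.1 hab))
  -- αt is monotone
  have hαtmono : Monotone αt := by
    intro a b hab
    have := hgmono.le_iff_le (a := αt a) (b := αt b)
    simp only [hg] at this
    rw [(hαt a).2, (hαt b).2] at this
    exact this.mp hab
  set M := max (δ1Inv (V1 x1 xh1)) (δ2Inv (V2 x2 xh2)) with hM
  have key : max ‖h1 x1 - hh1 xh1‖₊ ‖h2 x2 - hh2 xh2‖₊ ≤ g M := by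
    apply max_le
    · have h1' : ‖h1 x1 - hh1 xh1‖₊ ≤ α1Inv (V1 x1 xh1) := by
        have := hα1i.monotone (hV1 x1 xh1)
        rwa [(hα1Inv _).1] at this
      refine h1'.trans (le_trans ?_ (le_max_left _ _))
      apply hα1i.monotone
      have : V1 x1 xh1 = δ1 (δ1Inv (V1 x1 xh1)) := ((hδ1Inv _).2).symm
      rw [this]
      exact hδ1.2.1.monotone (le_max_left _ _)
    · have h2' : ‖h2 x2 - hh2 xh2‖₊ ≤ α2Inv (V2 x2 xh2) := by
        have := hα2i.monotone (hV2 x2 xh2)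
        rwa [(hα2Inv _).1] at this
      refine h2'.trans (le_trans ?_ (le_max_right _ _))
      apply hα2i.monotone
      have : V2 x2 xh2 = δ2 (δ2Inv (V2 x2 xh2)) := ((hδ2Inv _).2).symm
      rw [this]
      exact hδ2.2.1.monotone (le_max_right _ _)
  have := hαtmono key
  rwa [(hαt M).1] at this
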